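/- arXiv:1303.4569 — 5 statements merged into one kernel-verified Lean document; each statement's English description precedes it below -/
import Mathlib

section
/- Let A be a unital C*-algebra with triple product {x,y,z} = (x y* z + z y* x)/2, and let δ : A → A be a triple derivation. Then δ is a generalised Jordan derivation: δ(a ∘ b) = δ(a) ∘ b + a ∘ δ(b) - U_{a,b}(δ(1)) for all a,b in A, where a ∘ b = (ab + ba)/2 and U_{a,b}(x) = (a x b + b x a)/2. -/
noncomputable def tp {A : Type*} [NormedRing A] [StarRing A] [NormedAlgebra ℂ A]
    (x y z : A) : A :=
  (2:ℂ)⁻¹ • (x * star y * z + z * star y * x)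

theorem stmt6 {A : Type*} [NormedRing A] [StarRing A] [CStarRing A]
    [NormedAlgebra ℂ A] [StarModule ℂ A] [CompleteSpace A] (δ : A →ₗ[ℂ] A) (hδ : ∀ x y z : A, δ (tp x y z) = tp (δ x) y z + tp x (δ y) z + tp x y (δ z)) (a b : A) :
    δ ((2:ℂ)⁻¹ • (a * b + b * a)) =
      (2:ℂ)⁻¹ • (δ a * b + b * δ a) + (2:ℂ)⁻¹ • (a * δ b + δ b * a)
        - (2:ℂ)⁻¹ • (a * δ 1 * b + b * δ 1 * a) := by
  have e : ∀ x : A, (2:ℂ)⁻¹ • (x + x) = x := fun x => by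
    rw [← two_smul ℂ, smul_smul]; norm_num
  have h1 : star (δ 1) = - δ 1 := by
    have h := hδ 1 1 1
    simp only [tp, star_one, mul_one, one_mul, e] at h
    have h0 : δ 1 + (star (δ 1) + δ 1) = δ 1 + 0 := by
      rw [add_zero, ← add_assoc, ← h]
    have := add_left_cancel h0
    rw [eq_neg_iff_add_eq_zero]
    exact this
  have h2 := hδ a 1 b
  simp only [tp, star_one, mul_one, one_mul, h1] at h2
  rw [h2]
  simp only [smul_add, smul_neg, mul_neg, neg_mul]
  abel
end

section
/- Let A be a unital C*-algebra with triple product {x,y,z} = (x y* z + z y* x)/2, and let δ : A → A be a triple derivation. Then δ(a*) = 2 (δ(1) ∘ a*) + δ(a)* for every a in A, where x ∘ y = (xy+yx)/2. -/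
theorem stmt7 {A : Type*} [NormedRing A] [StarRing A] [CStarRing A]
    [NormedAlgebra ℂ A] [StarModule ℂ A] [CompleteSpace A] (δ : A →ₗ[ℂ] A) (hδ : ∀ x y z : A, δ (tp x y z) = tp (δ x) y z + tp x (δ y) z + tp x y (δ z)) (a : A) :
    δ (star a) = (2:ℂ) • ((2:ℂ)⁻¹ • (δ 1 * star a + star a * δ 1)) + star (δ a) := by
  have h := hδ 1 a 1
  have h1 : tp (1:A) a 1 = star a := by
    simp [tp, ← two_smul ℂ (star a), smul_smul]
  rw [h1] at h
  rw [h]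
  simp only [tp, star_one, mul_one, one_mul, smul_smul]
  module
end

section
/- Let A be a unital C*-algebra with triple product {x,y,z} = (x y* z + z y* x)/2, and let δ : A → A be a triple derivation with δ(1) = 0. Then δ is a *-derivation: δ(ab) = δ(a)b + aδ(b) and δ(a*) = δ(a)* for all a,b in A. -/
section Aux

variable {A : Type*} [NormedRing A] [StarRing A] [CStarRing A]
    [NormedAlgebra ℂ A] [StarModule ℂ A] [CompleteSpace A]

private lemma half_eq_zero {m : A} (h : m + m = 0) : m = 0 := by
  have h2 : (2:ℂ) • m = 0 := by rw [two_smul]; exact h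
  calc m = (2:ℂ)⁻¹ • ((2:ℂ) • m) := by rw [smul_smul]; norm_num
  _ = 0 := by rw [h2, smul_zero]

private lemma halfsmul (m : A) : (2:ℂ)⁻¹ • (m + m) = m := by
  rw [← two_smul ℂ m, smul_smul]; norm_num

private lemma cstar0 {t : A} (h : ∀ x : A, t * x * t = 0) : t = 0 := by
  have h1 : t * star t * t = 0 := h (star t)
  have h2 : (t * star t) * (t * star t) = 0 := by
    have e : (t * star t) * (t * star t) = (t * star t * t) * star t := by noncomm_ring
    rw [e, h1, zero_mul]
  have h3 : t * star t = 0 := by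
    have hs : star (t * star t) = t * star t := by rw [star_mul, star_star]
    have hn : ‖t * star t‖ * ‖t * star t‖ = 0 := by
      calc ‖t * star t‖ * ‖t * star t‖ = ‖star (t * star t) * (t * star t)‖ :=
            (CStarRing.norm_star_mul_self).symm
      _ = ‖(t * star t) * (t * star t)‖ := by rw [hs]
      _ = 0 := by rw [h2, norm_zero]
    exact norm_eq_zero.mp (mul_self_eq_zero.mp hn)
  have hn2 : ‖t‖ * ‖t‖ = 0 := by
    calc ‖t‖ * ‖t‖ = ‖t * star t‖ := (CStarRing.norm_self_mul_star).symm
    _ = 0 := by rw [h3, norm_zero]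
  exact norm_eq_zero.mp (mul_self_eq_zero.mp hn2)

private lemma lem1 {u v : A} (h : ∀ x : A, u * x * v + v * x * u = 0) :
    ∀ x : A, u * x * v = 0 := by
  have s1 : ∀ x y : A, v * x * (u * y * v) = 0 := by
    intro x y
    apply half_eq_zero
    have key : v * x * (u * y * v) + v * x * (u * y * v)
        = (u * x * v + v * x * u) * (y * v) + v * x * (u * y * v + v * y * u)
          - (u * (x * v * y) * v + v * (x * v * y) * u) := by noncomm_ring
    rw [key, h x, h y, h (x * v * y), zero_mul, mul_zero]
    simp
  intro x
  apply cstar0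
  intro y
  have e : u * x * v * y * (u * x * v) = u * x * (v * y * (u * x * v)) := by noncomm_ring
  rw [e, s1 y x, mul_zero]

private lemma flip1 {u v : A} (h : ∀ x : A, u * x * v = 0) : ∀ x : A, v * x * u = 0 := by
  intro x
  apply cstar0
  intro y
  have e : v * x * u * y * (v * x * u) = v * x * (u * y * v) * (x * u) := by noncomm_ring
  rw [e, h y, mul_zero, zero_mul]

variable (δ : A →ₗ[ℂ] A)

private lemma Lstar
    (hδ : ∀ x y z : A, δ (tp x y z) = tp (δ x) y z + tp x (δ y) z + tp x y (δ z))
    (h1 : δ 1 = 0) : ∀ a : A, δ (star a) = star (δ a) := by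
  intro a
  have h := hδ 1 a 1
  rw [h1] at h
  have e1 : tp (1:A) a 1 = star a := by
    simp only [tp, one_mul, mul_one]; exact halfsmul _
  have e2 : tp (0:A) a (1:A) = 0 := by simp [tp]
  have e3 : tp (1:A) a (0:A) = 0 := by simp [tp]
  have e4 : tp (1:A) (δ a) 1 = star (δ a) := by
    simp only [tp, one_mul, mul_one]; exact halfsmul _
  rw [e1, e2, e3, e4] at h
  simpa using h

private lemma L2
    (hδ : ∀ x y z : A, δ (tp x y z) = tp (δ x) y z + tp x (δ y) z + tp x y (δ z))
    (h1 : δ 1 = 0) :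
    ∀ u x : A, δ (u * x * u) = δ u * x * u + u * δ x * u + u * x * δ u := by
  have hs := Lstar δ hδ h1
  intro u x
  have h := hδ u (star x) u
  have e1 : tp u (star x) u = u * x * u := by
    simp only [tp, star_star]; exact halfsmul _
  have e2 : tp (δ u) (star x) u = (2:ℂ)⁻¹ • (δ u * x * u + u * x * δ u) := by
    simp only [tp, star_star]
  have e3 : tp u (δ (star x)) u = u * δ x * u := by
    simp only [tp, hs x, star_star]; exact halfsmul _
  have e4 : tp u (star x) (δ u) = (2:ℂ)⁻¹ • (u * x * δ u + δ u * x * u) := by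
    simp only [tp, star_star]
  rw [e1, e2, e3, e4] at h
  rw [h]
  have ec : u * x * δ u + δ u * x * u = δ u * x * u + u * x * δ u := by abel
  module

private lemma L2p
    (hδ : ∀ x y z : A, δ (tp x y z) = tp (δ x) y z + tp x (δ y) z + tp x y (δ z))
    (h1 : δ 1 = 0) :
    ∀ u v x : A, δ (u * x * v + v * x * u)
      = δ u * x * v + u * δ x * v + u * x * δ v + δ v * x * u + v * δ x * u + v * x * δ u := by
  have hL2 := L2 δ hδ h1
  intro u v x
  have h := hL2 (u + v) x
  have e : (u + v) * x * (u + v) = (u * x * v + v * x * u) + (u * x * u + v * x * v) := by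
    noncomm_ring
  rw [e, map_add δ (u * x * v + v * x * u) (u * x * u + v * x * v),
    map_add δ (u * x * u) (v * x * v), hL2 u x, hL2 v x, map_add δ u v] at h
  have h2 := eq_sub_of_add_eq h
  rw [h2]
  noncomm_ring

private lemma hJl
    (hδ : ∀ x y z : A, δ (tp x y z) = tp (δ x) y z + tp x (δ y) z + tp x y (δ z))
    (h1 : δ 1 = 0) :
    ∀ a b : A, δ (a * b) + δ (b * a) = δ a * b + a * δ b + δ b * a + b * δ a := by
  have hL2p := L2p δ hδ h1
  intro a b
  have h := hL2p a b 1
  rw [h1] at h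
  simp only [mul_one, one_mul, mul_zero, zero_mul, add_zero, zero_add] at h
  rw [map_add δ (a * b) (b * a)] at h
  exact h.trans (by noncomm_ring)

end Aux

section Main

variable {A : Type*} [NormedRing A] [StarRing A] [CStarRing A]
    [NormedAlgebra ℂ A] [StarModule ℂ A] [CompleteSpace A]

private noncomputable def Ee (δ : A →ₗ[ℂ] A) (a b : A) : A := δ (a * b) - δ a * b - a * δ b

private def Cc (a b : A) : A := a * b - b * a

variable (δ : A →ₗ[ℂ] A)

private lemma Ee_add_left (a a' b : A) : Ee δ (a + a') b = Ee δ a b + Ee δ a' b := by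
  simp only [Ee, add_mul, map_add]; abel

private lemma Ee_add_right (a b b' : A) : Ee δ a (b + b') = Ee δ a b + Ee δ a b' := by
  simp only [Ee, mul_add, map_add]; abel

private lemma Cc_add_left (a a' b : A) : Cc (a + a') b = Cc a b + Cc a' b := by
  simp only [Cc, add_mul, mul_add]; abel

private lemma Cc_add_right (a b b' : A) : Cc a (b + b') = Cc a b + Cc a b' := by
  simp only [Cc, add_mul, mul_add]; abel

private lemma L5
    (hδ : ∀ x y z : A, δ (tp x y z) = tp (δ x) y z + tp x (δ y) z + tp x y (δ z))
    (h1 : δ 1 = 0) :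
    ∀ a b x : A, Ee δ a b * x * Cc a b + Cc a b * x * Ee δ a b = 0 := by
  have hL2 := L2 δ hδ h1
  have hL2p := L2p δ hδ h1
  have hJ := hJl δ hδ h1
  intro a b x
  simp only [Ee, Cc]
  have w1 := hL2p (a * b) (b * a) x
  have e : (a*b)*x*(b*a) + (b*a)*x*(a*b) = a*(b*x*b)*a + b*(a*x*a)*b := by noncomm_ring
  have w2 : δ ((a*b)*x*(b*a) + (b*a)*x*(a*b))
      = δ a*(b*x*b)*a + a*(δ b*x*b + b*δ x*b + b*x*δ b)*a + a*(b*x*b)*δ a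
        + (δ b*(a*x*a)*b + b*(δ a*x*a + a*δ x*a + a*x*δ a)*b + b*(a*x*a)*δ b) := by
    rw [e, map_add δ (a*(b*x*b)*a) (b*(a*x*a)*b), hL2 a (b*x*b), hL2 b (a*x*a),
      hL2 b x, hL2 a x]
  have hJab := hJ a b
  have key : (δ (a*b) - δ a * b - a * δ b) * x * (a*b - b*a)
        + (a*b - b*a) * x * (δ (a*b) - δ a * b - a * δ b)
      = ((δ a*(b*x*b)*a + a*(δ b*x*b + b*δ x*b + b*x*δ b)*a + a*(b*x*b)*δ a
          + (δ b*(a*x*a)*b + b*(δ a*x*a + a*δ x*a + a*x*δ a)*b + b*(a*x*a)*δ b))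
        - (δ (a*b) * x * (b*a) + (a*b) * δ x * (b*a) + (a*b) * x * δ (b*a)
            + δ (b*a) * x * (a*b) + (b*a) * δ x * (a*b) + (b*a) * x * δ (a*b)))
        + ((a*b) * x * ((δ (a*b) + δ (b*a)) - (δ a * b + a * δ b + δ b * a + b * δ a))
          + ((δ (a*b) + δ (b*a)) - (δ a * b + a * δ b + δ b * a + b * δ a)) * x * (a*b)) := by
    noncomm_ring
  rw [key, ← w1, ← w2, hJab]
  simp

private lemma step2
    (hδ : ∀ x y z : A, δ (tp x y z) = tp (δ x) y z + tp x (δ y) z + tp x y (δ z))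
    (h1 : δ 1 = 0) :
    ∀ a b x : A, Ee δ a b * x * Cc a b = 0 :=
  fun a b => lem1 (fun x => L5 δ hδ h1 a b x)

private lemma step2'
    (hδ : ∀ x y z : A, δ (tp x y z) = tp (δ x) y z + tp x (δ y) z + tp x y (δ z))
    (h1 : δ 1 = 0) :
    ∀ a b x : A, Cc a b * x * Ee δ a b = 0 :=
  fun a b => flip1 (step2 δ hδ h1 a b)

private lemma step3
    (hδ : ∀ x y z : A, δ (tp x y z) = tp (δ x) y z + tp x (δ y) z + tp x y (δ z))
    (h1 : δ 1 = 0) :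
    ∀ a a' b x : A, Ee δ a b * x * Cc a' b = 0 := by
  intro a a' b x
  have hcross : ∀ y : A, Ee δ a b * y * Cc a' b + Ee δ a' b * y * Cc a b = 0 := by
    intro y
    have h := step2 δ hδ h1 (a + a') b y
    rw [Ee_add_left, Cc_add_left] at h
    have e : (Ee δ a b + Ee δ a' b) * y * (Cc a b + Cc a' b)
        = (Ee δ a b * y * Cc a b + Ee δ a' b * y * Cc a' b)
          + (Ee δ a b * y * Cc a' b + Ee δ a' b * y * Cc a b) := by noncomm_ring
    rw [e, step2 δ hδ h1 a b y, step2 δ hδ h1 a' b y] at h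
    simpa using h
  apply cstar0
  intro y
  have hneg : Ee δ a b * x * Cc a' b = -(Ee δ a' b * x * Cc a b) :=
    eq_neg_of_add_eq_zero_left (hcross x)
  calc Ee δ a b * x * Cc a' b * y * (Ee δ a b * x * Cc a' b)
      = -(Ee δ a' b * x * Cc a b) * y * (Ee δ a b * x * Cc a' b) := by rw [hneg]
  _ = -(Ee δ a' b * x * (Cc a b * y * Ee δ a b) * (x * Cc a' b)) := by noncomm_ring
  _ = 0 := by rw [step2' δ hδ h1 a b y]; simp

private lemma step3'
    (hδ : ∀ x y z : A, δ (tp x y z) = tp (δ x) y z + tp x (δ y) z + tp x y (δ z))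
    (h1 : δ 1 = 0) :
    ∀ a a' b x : A, Cc a' b * x * Ee δ a b = 0 :=
  fun a a' b => flip1 (step3 δ hδ h1 a a' b)

private lemma step4
    (hδ : ∀ x y z : A, δ (tp x y z) = tp (δ x) y z + tp x (δ y) z + tp x y (δ z))
    (h1 : δ 1 = 0) :
    ∀ a b a' b' x : A, Ee δ a b * x * Cc a' b' = 0 := by
  intro a b a' b' x
  have hcross : ∀ y : A, Ee δ a b * y * Cc a' b' + Ee δ a b' * y * Cc a' b = 0 := by
    intro y
    have h := step3 δ hδ h1 a a' (b + b') y
    rw [Ee_add_right, Cc_add_right] at h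
    have e : (Ee δ a b + Ee δ a b') * y * (Cc a' b + Cc a' b')
        = (Ee δ a b * y * Cc a' b + Ee δ a b' * y * Cc a' b')
          + (Ee δ a b * y * Cc a' b' + Ee δ a b' * y * Cc a' b) := by noncomm_ring
    rw [e, step3 δ hδ h1 a a' b y, step3 δ hδ h1 a a' b' y] at h
    simpa using h
  apply cstar0
  intro y
  have hneg : Ee δ a b * x * Cc a' b' = -(Ee δ a b' * x * Cc a' b) :=
    eq_neg_of_add_eq_zero_left (hcross x)
  calc Ee δ a b * x * Cc a' b' * y * (Ee δ a b * x * Cc a' b')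
      = -(Ee δ a b' * x * Cc a' b) * y * (Ee δ a b * x * Cc a' b') := by rw [hneg]
  _ = -(Ee δ a b' * x * (Cc a' b * y * Ee δ a b) * (x * Cc a' b')) := by noncomm_ring
  _ = 0 := by rw [step3' δ hδ h1 a a' b y]; simp

private lemma step4'
    (hδ : ∀ x y z : A, δ (tp x y z) = tp (δ x) y z + tp x (δ y) z + tp x y (δ z))
    (h1 : δ 1 = 0) :
    ∀ a b a' b' x : A, Cc a' b' * x * Ee δ a b = 0 :=
  fun a b a' b' => flip1 (step4 δ hδ h1 a b a' b')

private lemma starX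
    (hδ : ∀ x y z : A, δ (tp x y z) = tp (δ x) y z + tp x (δ y) z + tp x y (δ z))
    (h1 : δ 1 = 0) :
    ∀ a b x : A, δ (Ee δ a b) * x * Cc a b + Cc a b * x * δ (Ee δ a b)
      + (Ee δ a b * x * δ (Cc a b) + δ (Cc a b) * x * Ee δ a b) = 0 := by
  intro a b x
  have h0 : Ee δ a b * x * Cc a b + Cc a b * x * Ee δ a b = 0 := L5 δ hδ h1 a b x
  have h := L2p δ hδ h1 (Ee δ a b) (Cc a b) x
  rw [h0, map_zero] at h
  have hmid : Ee δ a b * δ x * Cc a b + Cc a b * δ x * Ee δ a b = 0 := L5 δ hδ h1 a b (δ x)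
  have key : δ (Ee δ a b) * x * Cc a b + Cc a b * x * δ (Ee δ a b)
        + (Ee δ a b * x * δ (Cc a b) + δ (Cc a b) * x * Ee δ a b)
      = (δ (Ee δ a b) * x * Cc a b + Ee δ a b * δ x * Cc a b + Ee δ a b * x * δ (Cc a b)
          + δ (Cc a b) * x * Ee δ a b + Cc a b * δ x * Ee δ a b + Cc a b * x * δ (Ee δ a b))
        - (Ee δ a b * δ x * Cc a b + Cc a b * δ x * Ee δ a b) := by abel
  rw [key, ← h, hmid]
  simp

private lemma step5
    (hδ : ∀ x y z : A, δ (tp x y z) = tp (δ x) y z + tp x (δ y) z + tp x y (δ z))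
    (h1 : δ 1 = 0) :
    ∀ a b : A, δ (Cc a b) = Ee δ a b + Ee δ a b + Cc (δ a) b + Cc a (δ b) := by
  intro a b
  have hJab := hJl δ hδ h1 a b
  have hba : δ (b * a) = δ a * b + a * δ b + δ b * a + b * δ a - δ (a * b) := by
    rw [← hJab]; abel
  simp only [Cc, Ee, map_sub]
  rw [hba]
  abel

private lemma step6
    (hδ : ∀ x y z : A, δ (tp x y z) = tp (δ x) y z + tp x (δ y) z + tp x y (δ z))
    (h1 : δ 1 = 0) :
    ∀ a b x y : A, Ee δ a b * x * Ee δ a b * y * Ee δ a b = 0 := by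
  intro a b x y
  have h := starX δ hδ h1 a b (x * Ee δ a b * y)
  rw [step5 δ hδ h1 a b] at h
  have key : Ee δ a b * x * Ee δ a b * y * Ee δ a b + Ee δ a b * x * Ee δ a b * y * Ee δ a b
        + Ee δ a b * x * Ee δ a b * y * Ee δ a b + Ee δ a b * x * Ee δ a b * y * Ee δ a b
      = (δ (Ee δ a b) * (x * Ee δ a b * y) * Cc a b
          + Cc a b * (x * Ee δ a b * y) * δ (Ee δ a b)
          + (Ee δ a b * (x * Ee δ a b * y) * (Ee δ a b + Ee δ a b + Cc (δ a) b + Cc a (δ b))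
            + (Ee δ a b + Ee δ a b + Cc (δ a) b + Cc a (δ b)) * (x * Ee δ a b * y) * Ee δ a b))
        - δ (Ee δ a b) * x * (Ee δ a b * y * Cc a b)
        - (Cc a b * x * Ee δ a b) * (y * δ (Ee δ a b))
        - Ee δ a b * x * (Ee δ a b * y * Cc (δ a) b)
        - Ee δ a b * x * (Ee δ a b * y * Cc a (δ b))
        - (Cc (δ a) b * x * Ee δ a b) * (y * Ee δ a b)
        - (Cc a (δ b) * x * Ee δ a b) * (y * Ee δ a b) := by noncomm_ring
  rw [h, step2 δ hδ h1 a b y, step2' δ hδ h1 a b x, step4 δ hδ h1 a b (δ a) b y,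
    step4 δ hδ h1 a b a (δ b) y, step4' δ hδ h1 a b (δ a) b x,
    step4' δ hδ h1 a b a (δ b) x] at key
  simp only [mul_zero, zero_mul, sub_zero, zero_sub, zero_add, add_zero, zero_sub, neg_zero,
    sub_self] at key
  have h4 : (Ee δ a b * x * Ee δ a b * y * Ee δ a b + Ee δ a b * x * Ee δ a b * y * Ee δ a b)
      + (Ee δ a b * x * Ee δ a b * y * Ee δ a b + Ee δ a b * x * Ee δ a b * y * Ee δ a b)
      = 0 := by rw [← key]; abel
  exact half_eq_zero (half_eq_zero h4)

private lemma step7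
    (hδ : ∀ x y z : A, δ (tp x y z) = tp (δ x) y z + tp x (δ y) z + tp x y (δ z))
    (h1 : δ 1 = 0) :
    ∀ a b : A, Ee δ a b = 0 := by
  intro a b
  have hxu : ∀ x : A, Ee δ a b * x * Ee δ a b = 0 := by
    intro x
    apply cstar0
    intro y
    have e : Ee δ a b * x * Ee δ a b * y * (Ee δ a b * x * Ee δ a b)
        = (Ee δ a b * x * Ee δ a b * y * Ee δ a b) * (x * Ee δ a b) := by noncomm_ring
    rw [e, step6 δ hδ h1 a b x y, zero_mul]
  exact cstar0 hxu

end Main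

theorem stmt8 {A : Type*} [NormedRing A] [StarRing A] [CStarRing A]
    [NormedAlgebra ℂ A] [StarModule ℂ A] [CompleteSpace A] (δ : A →ₗ[ℂ] A) (hδ : ∀ x y z : A, δ (tp x y z) = tp (δ x) y z + tp x (δ y) z + tp x y (δ z)) (h1 : δ 1 = 0) :
    (∀ a b : A, δ (a * b) = δ a * b + a * δ b) ∧ (∀ a : A, δ (star a) = star (δ a)) := by
  constructor
  · intro a b
    have h := step7 δ hδ h1 a b
    have h' : δ (a * b) - δ a * b - a * δ b = 0 := by simpa [Ee] using h
    calc δ (a * b) = (δ (a * b) - δ a * b - a * δ b) + (δ a * b + a * δ b) := by abel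
    _ = 0 + (δ a * b + a * δ b) := by rw [h']
    _ = δ a * b + a * δ b := by rw [zero_add]
  · exact Lstar δ hδ h1
end

section
/- Let A be a unital C*-algebra with triple product {x,y,z} = (x y* z + z y* x)/2, and let δ : A → A be a triple derivation. Then the map δ - δ(½δ(1), 1), where δ(c,d)(x) := {c,d,x} - {d,c,x}, is a *-derivation on A. -/
set_option maxHeartbeats 1000000
set_option linter.unusedSectionVars false

section Aux

variable {A : Type*} [NormedRing A] [StarRing A] [CStarRing A]
    [NormedAlgebra ℂ A] [StarModule ℂ A]

private lemma half2 (x : A) : (2:ℂ)⁻¹ • (x + x) = x := by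
  rw [← two_smul ℂ x, smul_smul]
  norm_num

private lemma halfinj {x y : A} (h : (2:ℂ)⁻¹ • x = (2:ℂ)⁻¹ • y) : x = y :=
  smul_right_injective A (by norm_num) h

private lemma addselfA {x : A} (h : x + x = 0) : x = 0 := by
  have h2 : (2:ℂ) • x = 0 := by rw [two_smul]; exact h
  rcases smul_eq_zero.mp h2 with h3 | h3
  · exact absurd h3 (by norm_num)
  · exact h3

private lemma halveA {x y : A} (h : x + x = y + y) : x = y := by
  have h2 : (x - y) + (x - y) = 0 := by
    calc (x - y) + (x - y) = (x + x) - (y + y) := by abel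
    _ = 0 := by rw [h, sub_self]
  exact sub_eq_zero.mp (addselfA h2)

private lemma spA (w : A) (h : w * star w * w = 0) : w = 0 := by
  have hb : (w * star w) * (w * star w) = 0 := by
    calc (w * star w) * (w * star w) = (w * star w * w) * star w := by noncomm_ring
    _ = 0 := by rw [h, zero_mul]
  have hbsa : star (w * star w) = w * star w := by
    rw [star_mul, star_star]
  have h1 : ‖w * star w‖ * ‖w * star w‖ = 0 := by
    rw [← CStarRing.norm_star_mul_self (x := w * star w), hbsa, hb, norm_zero]
  have h2 : w * star w = 0 := norm_eq_zero.mp (mul_self_eq_zero.mp h1)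
  have h3 : ‖w‖ * ‖w‖ = 0 := by
    rw [← CStarRing.norm_self_mul_star (x := w), h2, norm_zero]
  exact norm_eq_zero.mp (mul_self_eq_zero.mp h3)

private lemma sp2A (w : A) (h : ∀ y, w * y * w = 0) : w = 0 :=
  spA w (h (star w))

private lemma l3A (p q : A) (h : ∀ x, p * x * q + q * x * p = 0) (x : A) :
    p * x * q = 0 := by
  apply sp2A
  intro y
  have key : (p*x*q)*y*(p*x*q) + (p*x*q)*y*(p*x*q) =
      (p*x*q*y)*(p*x*q + q*x*p) - (p*(x*q*y)*q + q*(x*q*y)*p)*(x*p)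
      + (p*x*q*y)*(p*x*q + q*x*p) - (p*x*q + q*x*p)*(y*(q*x*p))
      + (q*x)*(p*y*q + q*y*p)*(x*p) := by noncomm_ring
  rw [h x, h y, h (x*q*y)] at key
  simp only [mul_zero, zero_mul, sub_zero, add_zero, zero_add, zero_sub, neg_zero] at key
  exact addselfA key

private lemma normsqA (z : A) (hz : z * star z = star z * z) :
    ‖z * z‖ = ‖z‖ * ‖z‖ := by
  have e1 : (z*z) * star (z*z) = (z * star z) * (z * star z) := by
    rw [star_mul]
    calc z*z*(star z * star z) = z*(z*star z)*star z := by noncomm_ring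
    _ = z*(star z*z)*star z := by rw [hz]
    _ = (z*star z)*(z*star z) := by noncomm_ring
  have hsa : star (z * star z) = z * star z := by rw [star_mul, star_star]
  have e2 : ‖z*z‖ * ‖z*z‖ = (‖z‖*‖z‖) * (‖z‖*‖z‖) := by
    calc ‖z*z‖ * ‖z*z‖ = ‖(z*z) * star (z*z)‖ := (CStarRing.norm_self_mul_star).symm
    _ = ‖(z*star z) * (z*star z)‖ := by rw [e1]
    _ = ‖star (z*star z) * (z*star z)‖ := by rw [hsa]
    _ = ‖z*star z‖ * ‖z*star z‖ := CStarRing.norm_star_mul_self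
    _ = (‖z‖*‖z‖) * (‖z‖*‖z‖) := by rw [CStarRing.norm_self_mul_star]
  exact (mul_self_inj (norm_nonneg _) (by positivity)).mp e2

private lemma central_cube_zeroA (q : A) (hc : ∀ y, q * y = y * q)
    (h3 : q * q * q = 0) : q = 0 := by
  have hn : q * star q = star q * q := hc (star q)
  have n1 : ‖q*q‖ = ‖q‖*‖q‖ := normsqA q hn
  have hc2 : (q*q) * star (q*q) = star (q*q) * (q*q) := by
    calc (q*q) * star (q*q) = q * (q * star (q*q)) := by rw [mul_assoc]
    _ = q * (star (q*q) * q) := by rw [hc (star (q*q))]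
    _ = (q * star (q*q)) * q := by rw [mul_assoc]
    _ = (star (q*q) * q) * q := by rw [hc (star (q*q))]
    _ = star (q*q) * (q*q) := by rw [mul_assoc]
  have n2 : ‖(q*q)*(q*q)‖ = ‖q*q‖*‖q*q‖ := normsqA (q*q) hc2
  have z4 : (q*q)*(q*q) = 0 := by
    calc (q*q)*(q*q) = (q*q*q)*q := by noncomm_ring
    _ = 0 := by rw [h3, zero_mul]
  have hq2 : q * q = 0 := by
    apply norm_eq_zero.mp
    apply mul_self_eq_zero.mp
    rw [← n2, z4, norm_zero]
  apply norm_eq_zero.mp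
  apply mul_self_eq_zero.mp
  rw [← n1, hq2, norm_zero]

private lemma jordanMagic (d : A →ₗ[ℂ] A) (h1 : d 1 = 0)
    (hJ3 : ∀ a m c : A, d (a*m*c + c*m*a) =
      d a*m*c + c*m*d a + a*d m*c + c*d m*a + a*m*d c + d c*m*a) :
    ∀ a b : A, d (a*b) = d a * b + a * d b := by
  have her : ∀ p m : A, d (p*m*p) = d p*m*p + p*d m*p + p*m*d p := by
    intro p m
    have e := hJ3 p m p
    rw [map_add] at e
    exact halveA (by rw [e]; abel)
  have j2 : ∀ p r : A, d (p*r + r*p) = d p*r + r*d p + p*d r + d r*p := by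
    intro p r
    have e := hJ3 p 1 r
    simpa [h1] using e
  have hba : ∀ a b : A, d (b*a) = d a*b + b*d a + a*d b + d b*a - d (a*b) := by
    intro a b
    have e := j2 a b
    rw [map_add] at e
    linear_combination (norm := noncomm_ring) e
  have l3' : ∀ a b x : A, (d (a*b) - d a*b - a*d b) * x * (b*a - a*b) = 0 := by
    intro a b
    have h4 : ∀ x, (d (a*b) - d a*b - a*d b) * x * (b*a - a*b)
        + (b*a - a*b) * x * (d (a*b) - d a*b - a*d b) = 0 := by
      intro x
      have eA := hJ3 (a*b) x (b*a)
      rw [show (a*b)*x*(b*a) = a*(b*x*b)*a from by noncomm_ring,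
        show (b*a)*x*(a*b) = b*(a*x*a)*b from by noncomm_ring, map_add,
        her a (b*x*b), her b (a*x*a), her b x, her a x, hba a b] at eA
      linear_combination (norm := noncomm_ring) -eA
    exact l3A _ _ h4
  have lin5a : ∀ a b c x : A,
      (d (a*b) - d a*b - a*d b) * x * (c*a - a*c) = 0 := by
    intro a b c
    have lin1 : ∀ x, (d (a*b) - d a*b - a*d b) * x * (c*a - a*c)
        + (d (a*c) - d a*c - a*d c) * x * (b*a - a*b) = 0 := by
      intro x
      have e := l3' a (b+c) x
      simp only [mul_add, add_mul, map_add] at e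
      linear_combination (norm := noncomm_ring) e - l3' a b x - l3' a c x
    intro x
    apply sp2A
    intro y
    linear_combination (norm := noncomm_ring)
      (lin1 x) * (y * ((d (a*b) - d a*b - a*d b) * x * (c*a - a*c)))
      - l3' a c (x*(b*a - a*b)*y*(d (a*b) - d a*b - a*d b)*x)
  have lin5b : ∀ a b c r x : A,
      (d (a*b) - d a*b - a*d b) * x * (c*r - r*c) = 0 := by
    intro a b c r
    have lin2 : ∀ x, (d (a*b) - d a*b - a*d b) * x * (c*r - r*c)
        + (d (r*b) - d r*b - r*d b) * x * (c*a - a*c) = 0 := by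
      intro x
      have e := lin5a (a+r) b c x
      simp only [mul_add, add_mul, map_add] at e
      linear_combination (norm := noncomm_ring) e - lin5a a b c x - lin5a r b c x
    intro x
    apply sp2A
    intro y
    linear_combination (norm := noncomm_ring)
      (lin2 x) * (y * ((d (a*b) - d a*b - a*d b) * x * (c*r - r*c)))
      - lin5a r b c (x*(c*a - a*c)*y*(d (a*b) - d a*b - a*d b)*x)
  have central : ∀ a b y : A,
      (d (a*b) - d a*b - a*d b) * y = y * (d (a*b) - d a*b - a*d b) := by
    intro a b y
    have hv : ∀ x, ((d (a*b) - d a*b - a*d b) * y - y * (d (a*b) - d a*b - a*d b))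
        * x * ((d (a*b) - d a*b - a*d b) * y - y * (d (a*b) - d a*b - a*d b)) = 0 := by
      intro x
      linear_combination (norm := noncomm_ring)
        lin5b a b (d (a*b) - d a*b - a*d b) y (y*x)
        - y * (lin5b a b (d (a*b) - d a*b - a*d b) y x)
    have hv0 := sp2A _ hv
    linear_combination (norm := noncomm_ring) hv0
  intro a b
  have hqu1 : (d (a*b) - d a*b - a*d b) * (b*a - a*b) = 0 := by
    have e := l3' a b 1
    rwa [mul_one] at e
  have huq1 : (b*a - a*b) * (d (a*b) - d a*b - a*d b) = 0 := by
    rw [← central a b (b*a - a*b)]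
    exact hqu1
  have equ := j2 (d (a*b) - d a*b - a*d b) (b*a - a*b)
  rw [hqu1, huq1] at equ
  simp only [add_zero, map_zero] at equ
  -- equ : 0 = d q * u + u * d q + q * d u + d u * q
  have hcent := central a b (d (b*a - a*b))
  have e2 : (d (a*b) - d a*b - a*d b) * (d (a*b) - d a*b - a*d b) * d (b*a - a*b)
      + (d (a*b) - d a*b - a*d b) * (d (a*b) - d a*b - a*d b) * d (b*a - a*b) = 0 := by
    linear_combination (norm := noncomm_ring)
      (-(d (a*b) - d a*b - a*d b)) * equ
      - l3' a b (d (d (a*b) - d a*b - a*d b))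
      - (l3' a b 1) * (d (d (a*b) - d a*b - a*d b))
      + (d (a*b) - d a*b - a*d b) * hcent
  have e3 := addselfA e2
  have e6 : d (b*a - a*b) = d (b*a) - d (a*b) := map_sub d _ _
  have e5 := j2 a b
  rw [map_add] at e5
  have e4 : (d (a*b) - d a*b - a*d b) + (d (a*b) - d a*b - a*d b)
      = -(d (b*a - a*b)) - (d a*b - b*d a) - (a*d b - d b*a) := by
    linear_combination (norm := noncomm_ring) e5 + e6
  have hq3' : (d (a*b) - d a*b - a*d b) * (d (a*b) - d a*b - a*d b) * (d (a*b) - d a*b - a*d b)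
      + (d (a*b) - d a*b - a*d b) * (d (a*b) - d a*b - a*d b) * (d (a*b) - d a*b - a*d b) = 0 := by
    linear_combination (norm := noncomm_ring)
      ((d (a*b) - d a*b - a*d b) * (d (a*b) - d a*b - a*d b)) * e4 - e3
      - (d (a*b) - d a*b - a*d b) * (lin5b a b (d a) b 1)
      - (d (a*b) - d a*b - a*d b) * (lin5b a b a (d b) 1)
  have hq3 := addselfA hq3'
  have hq0 := central_cube_zeroA (d (a*b) - d a*b - a*d b) (central a b) hq3
  linear_combination (norm := noncomm_ring) hq0

end Aux

theorem stmt9 {A : Type*} [NormedRing A] [StarRing A] [CStarRing A]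
    [NormedAlgebra ℂ A] [StarModule ℂ A] [CompleteSpace A] (δ : A →ₗ[ℂ] A) (hδ : ∀ x y z : A, δ (tp x y z) = tp (δ x) y z + tp x (δ y) z + tp x y (δ z)) :
    (∀ a b : A,
      (δ (a * b) - (tp ((2:ℂ)⁻¹ • δ 1) 1 (a * b) - tp 1 ((2:ℂ)⁻¹ • δ 1) (a * b))) =
        (δ a - (tp ((2:ℂ)⁻¹ • δ 1) 1 a - tp 1 ((2:ℂ)⁻¹ • δ 1) a)) * b
        + a * (δ b - (tp ((2:ℂ)⁻¹ • δ 1) 1 b - tp 1 ((2:ℂ)⁻¹ • δ 1) b))) ∧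
    (∀ a : A,
      (δ (star a) - (tp ((2:ℂ)⁻¹ • δ 1) 1 (star a) - tp 1 ((2:ℂ)⁻¹ • δ 1) (star a))) =
        star (δ a - (tp ((2:ℂ)⁻¹ • δ 1) 1 a - tp 1 ((2:ℂ)⁻¹ • δ 1) a))) := by
  set k : A := (2:ℂ)⁻¹ • δ 1 with hk
  -- star of δ 1
  have h111 : tp (1:A) 1 1 = 1 := by
    simp only [tp, star_one, mul_one, one_mul]
    exact half2 1
  have hS0 : star (δ 1) = -(δ 1) := by
    have e := hδ 1 1 1
    rw [h111] at e
    have t1 : tp (δ 1) (1:A) 1 = δ 1 := by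
      simp only [tp, star_one, mul_one, one_mul]; exact half2 _
    have t2 : tp (1:A) (δ 1) 1 = star (δ 1) := by
      simp only [tp, mul_one, one_mul]; exact half2 _
    have t3 : tp (1:A) 1 (δ 1) = δ 1 := by
      simp only [tp, star_one, mul_one, one_mul]; exact half2 _
    rw [t1, t2, t3] at e
    linear_combination (norm := noncomm_ring) -e
  have hks : star k = -k := by
    calc star k = star ((2:ℂ)⁻¹) • star (δ 1) := by rw [hk, star_smul]
    _ = (2:ℂ)⁻¹ • -(δ 1) := by rw [hS0]; norm_num
    _ = -k := by rw [hk, smul_neg]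
  have hkk : δ 1 = k + k := by
    rw [hk, ← two_smul ℂ ((2:ℂ)⁻¹ • δ 1), smul_smul]
    norm_num
  -- full (unhalved) triple derivation rule
  have S3 : ∀ a b c : A, δ (a * star b * c + c * star b * a) =
      (δ a * star b * c + c * star b * δ a) + (a * star (δ b) * c + c * star (δ b) * a)
      + (a * star b * δ c + δ c * star b * a) := by
    intro a b c
    have e := hδ a b c
    simp only [tp] at e
    rw [map_smul] at e
    rw [← smul_add, ← smul_add] at e
    exact halfinj e
  -- star formula for δ
  have S4 : ∀ a : A, δ (star a) = star (δ a) + (δ 1 * star a + star a * δ 1) := by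
    intro a
    have e := S3 1 a 1
    simp only [one_mul, mul_one] at e
    rw [map_add] at e
    exact halveA (by rw [e]; abel)
  -- the corrected map
  set Dl : A →ₗ[ℂ] A := δ - (LinearMap.mulLeft ℂ k + LinearMap.mulRight ℂ k) with hD
  have hDapp : ∀ x : A, Dl x = δ x - (k * x + x * k) := by
    intro x
    simp [hD, LinearMap.sub_apply, LinearMap.add_apply,
      LinearMap.mulLeft_apply, LinearMap.mulRight_apply]
  have hD1 : Dl 1 = 0 := by
    rw [hDapp, mul_one, one_mul, hkk]; abel
  have hDstar : ∀ a : A, Dl (star a) = star (Dl a) := by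
    intro a
    rw [hDapp, hDapp, S4 a]
    simp only [star_sub, star_add, star_mul, star_star, hks, hS0, hkk]
    noncomm_ring
  have hDstar2 : ∀ m : A, star (δ (star m)) = δ m - (m*k + k*m + m*k + k*m) := by
    intro m
    rw [S4 m]
    simp only [star_add, star_mul, star_star, hS0, hkk, hks]
    noncomm_ring
  have DJ3 : ∀ a m c : A, Dl (a*m*c + c*m*a) =
      Dl a*m*c + c*m*Dl a + a*Dl m*c + c*Dl m*a + a*m*Dl c + Dl c*m*a := by
    intro a m c
    have e := S3 a (star m) c
    rw [star_star] at e
    rw [hDstar2 m] at e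
    simp only [hDapp]
    rw [e]
    noncomm_ring
  have hprod := jordanMagic Dl hD1 DJ3
  have hcorr : ∀ x : A, tp k 1 x - tp 1 k x = k * x + x * k := by
    intro x
    simp only [tp, star_one, mul_one, one_mul, hks]
    rw [show (-k)*x + x*(-k) = -(k*x + x*k) from by noncomm_ring, smul_neg,
      sub_neg_eq_add, ← smul_add]
    exact half2 _
  constructor
  · intro a b
    have e := hprod a b
    simp only [hDapp] at e
    rw [hcorr, hcorr, hcorr]
    exact e
  · intro a
    have e := hDstar a
    simp only [hDapp] at e
    rw [hcorr, hcorr]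
    exact e
end

section
/- Let A be a unital C*-algebra and T : A → A a linear map such that for each a ∈ A there exists a triple derivation δ_a on A (for the triple product {x,y,z} = (x y* z + z y* x)/2) with T(a) = δ_a(a). Then P₀(e)(T(e)) = 0 and P₂(e)(T(e)) = -Q(e)(T(e)) for every partial isometry e in A. -/
theorem stmt19 {A : Type*} [NormedRing A] [StarRing A] [CStarRing A]
    [NormedAlgebra ℂ A] [StarModule ℂ A] [CompleteSpace A] (T : A →ₗ[ℂ] A)
    (hT : ∀ a : A, ∃ δ : A →ₗ[ℂ] A,
      (∀ x y z : A, δ (tp x y z) = tp (δ x) y z + tp x (δ y) z + tp x y (δ z)) ∧ T a = δ a)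
    (e : A) (he : e * star e * e = e) :
    (T e - (2:ℂ) • tp e e (T e) + tp e (tp e (T e) e) e = 0) ∧
    (tp e (tp e (T e) e) e = - tp e (T e) e) := by
  obtain ⟨δ, hδ, hTe⟩ := hT e
  have he' : star e * e * star e = star e := by
    have := congrArg star he
    simpa [star_mul, mul_assoc] using this
  have hee : tp e e e = e := by
    simp only [tp, he]
    rw [← two_smul ℂ e, smul_smul]
    norm_num
  have hI : T e = e * star e * T e + T e * star e * e + e * star (T e) * e := by
    rw [hTe]
    have h0 : δ e = tp (δ e) e e + tp e (δ e) e + tp e e (δ e) := by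
      conv_lhs => rw [← hee]
      exact hδ e e e
    nth_rewrite 1 [h0]
    simp only [tp]
    module
  have hA : ∀ x : A, e * (star e * (e * x)) = e * x := fun x => by
    rw [← mul_assoc, ← mul_assoc, he]
  have hB : ∀ x : A, star e * (e * (star e * x)) = star e * x := fun x => by
    rw [← mul_assoc, ← mul_assoc, he']
  have hC : e * (star e * e) = e := by rw [← mul_assoc, he]
  have h3 := congrArg (fun x => e * star e * x * star e * e) hI
  simp only [mul_add, add_mul, mul_assoc, hA, hB, hC] at h3
  have h4 : e * (star e * (T e * (star e * e))) + e * (star (T e) * e) = 0 := by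
    have h5 : e * (star e * (T e * (star e * e))) +
        (e * (star e * (T e * (star e * e))) + e * (star (T e) * e)) =
        e * (star e * (T e * (star e * e))) + 0 := by
      rw [add_zero, ← add_assoc]; exact h3.symm
    exact add_left_cancel h5
  have hp : ∀ y : A, tp e y e = e * star y * e := by
    intro y
    simp only [tp]
    rw [← two_smul ℂ (e * star y * e), smul_smul]
    norm_num
  have hP2 : tp e (tp e (T e) e) e = e * (star e * (T e * (star e * e))) := by
    rw [hp, hp]
    simp [star_mul, star_star, mul_assoc]
  have hL2 : (2:ℂ) • tp e e (T e) = e * star e * T e + T e * star e * e := by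
    simp only [tp, smul_smul]
    norm_num
  constructor
  · rw [hP2, hL2]
    nth_rewrite 1 [hI]
    simp only [mul_assoc]
    rw [add_sub_cancel_left, add_comm]
    exact h4
  · rw [hP2, hp]
    simp only [mul_assoc]
    exact eq_neg_of_add_eq_zero_left h4
end
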